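/- The n×n matrix with (i,j) entry τ(i) − τ(gcd(i,j)) equals C · Dᵀ, where τ is the number-of-divisors function, C is the divisibility matrix (c_{ij}=1 iff j|i) and D its complement (d_{ij}=1 iff j∤i). -/

import Mathlib

open Finset Matrix

lemma card_filter_dvd_eq_divisors_card (n m : ℕ) (hm : 0 < m) (hmn : m ≤ n) :
    ((Finset.range n).filter (fun d => (d+1) ∣ m)).card = m.divisors.card := by
  apply Finset.card_nbij' (fun d => d + 1) (fun x => x - 1)
  · intro d hd
    simp only [mem_filter, mem_range, Finset.mem_coe] at hd
    simp [Nat.mem_divisors, hd.2, hm.ne']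
  · intro x hx
    simp only [Nat.mem_divisors, Finset.mem_coe] at hx
    have hx1 : 1 ≤ x := Nat.pos_of_dvd_of_pos hx.1 hm
    have hxm : x ≤ m := Nat.le_of_dvd hm hx.1
    simp only [mem_filter, mem_range, Finset.mem_coe]
    constructor
    · omega
    · rw [Nat.sub_add_cancel hx1]; exact hx.1
  · intro d hd; dsimp only; omega
  · intro x hx
    have hx1 : 1 ≤ x := Nat.pos_of_mem_divisors hx
    dsimp only
    omega

theorem gcd_matrix_tau_case (n : ℕ) :
    (Matrix.of fun i j : Fin n =>
        (((i.1 + 1).divisors.card : ℂ) - ((Nat.gcd (i.1 + 1) (j.1 + 1)).divisors.card : ℂ))) =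
      (Matrix.of fun i j : Fin n => if (j.1 + 1) ∣ (i.1 + 1) then (1 : ℂ) else 0) *
        (Matrix.of fun i j : Fin n => if ¬ (j.1 + 1) ∣ (i.1 + 1) then (1 : ℂ) else 0)ᵀ := by
  ext i j
  set a := i.1 + 1 with ha
  set b := j.1 + 1 with hb
  have ha0 : 0 < a := Nat.succ_pos _
  have han : a ≤ n := i.2
  have hg0 : 0 < Nat.gcd a b := Nat.gcd_pos_of_pos_left _ ha0
  have hgn : Nat.gcd a b ≤ n := le_trans (Nat.le_of_dvd ha0 (Nat.gcd_dvd_left a b)) han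
  simp only [Matrix.mul_apply, Matrix.of_apply, Matrix.transpose_apply]
  rw [Fin.sum_univ_eq_sum_range
    (fun k => (if (k + 1) ∣ a then (1:ℂ) else 0) * (if ¬ (k + 1) ∣ b then (1:ℂ) else 0))]
  have hsum : ∑ k ∈ Finset.range n,
      (if (k + 1) ∣ a then (1:ℂ) else 0) * (if ¬ (k + 1) ∣ b then (1:ℂ) else 0) =
      (((Finset.range n).filter (fun k => (k+1) ∣ a ∧ ¬ (k+1) ∣ b)).card : ℂ) := by
    rw [Finset.card_filter]
    push_cast
    refine Finset.sum_congr rfl fun k _ => ?_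
    by_cases h1 : (k+1) ∣ a <;> by_cases h2 : (k+1) ∣ b <;> simp [h1, h2]
  rw [hsum]
  have hA := card_filter_dvd_eq_divisors_card n a ha0 han
  have hG := card_filter_dvd_eq_divisors_card n (Nat.gcd a b) hg0 hgn
  have hsplit : (((Finset.range n).filter (fun k => (k+1) ∣ a)).filter
        (fun k => (k+1) ∣ b)).card +
      (((Finset.range n).filter (fun k => (k+1) ∣ a)).filter
        (fun k => ¬ (k+1) ∣ b)).card =
      ((Finset.range n).filter (fun k => (k+1) ∣ a)).card :=
    Finset.card_filter_add_card_filter_not _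
  rw [Finset.filter_filter, Finset.filter_filter] at hsplit
  have hgfilter : ((Finset.range n).filter (fun k => (k+1) ∣ a ∧ (k+1) ∣ b)) =
      ((Finset.range n).filter (fun k => (k+1) ∣ Nat.gcd a b)) := by
    refine Finset.filter_congr fun k _ => ?_
    simp [Nat.dvd_gcd_iff]
  rw [hgfilter] at hsplit
  rw [hA, hG] at hsplit
  have : (((Finset.range n).filter (fun k => (k+1) ∣ a ∧ ¬ (k+1) ∣ b)).card : ℂ) =
      (a.divisors.card : ℂ) - ((Nat.gcd a b).divisors.card : ℂ) := by
    have := hsplit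
    push_cast [← this]
    ring
  rw [this]
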